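/- arXiv:1711.00952 — 4 statements merged into one kernel-verified Lean document; each statement's English description precedes it below -/
import Mathlib

section
/- Let γ : [0,∞) → ℝ be a C¹ function with sup_{t≥0} γ'(t) = C < ∞, and let (t_k) be a sequence of positive reals with t_k → ∞ and γ(t_k) → ∞. Then there exists a sequence (t̃_k) such that t̃_k → ∞, γ(t̃_k) → ∞, and for every k and every t ∈ [0, k], γ(t + t̃_k) ≥ γ(t̃_k). -/
open Filter Set

lemma stmt_0_key (γ : ℝ → ℝ) (C : ℝ)
    (hγ : ContDiff ℝ 1 γ)
    (hC : ∀ t : ℝ, 0 ≤ t → deriv γ t ≤ C)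
    (k : ℝ) (hk : 0 ≤ k) (a b : ℝ) (ha : 0 < a) (hab : a < b)
    (hb : γ a + max C 0 * k + 1 ≤ γ b) :
    ∃ s : ℝ, a ≤ s ∧ γ a ≤ γ s ∧ ∀ u ∈ Set.Icc (0 : ℝ) k, γ s ≤ γ (u + s) := by
  have hdiff : Differentiable ℝ γ := hγ.differentiable one_ne_zero
  have hcont : Continuous γ := hdiff.continuous
  -- mean value bound
  have mvt : ∀ x y : ℝ, 0 < x → x < y → γ y - γ x ≤ max C 0 * (y - x) := by
    intro x y hx hxy
    obtain ⟨c, hc, hceq⟩ := exists_deriv_eq_slope γ hxy (hcont.continuousOn)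
      (hdiff.differentiableOn)
    have hc0 : 0 ≤ c := le_of_lt (lt_trans hx hc.1)
    have hCc : deriv γ c ≤ max C 0 := le_trans (hC c hc0) (le_max_left _ _)
    have hslope : (γ y - γ x) / (y - x) ≤ max C 0 := by
      calc (γ y - γ x) / (y - x) = deriv γ c := hceq.symm
        _ ≤ max C 0 := hCc
    have hyx : 0 < y - x := sub_pos.mpr hxy
    calc γ y - γ x = (γ y - γ x) / (y - x) * (y - x) := by field_simp
      _ ≤ max C 0 * (y - x) := mul_le_mul_of_nonneg_right hslope (le_of_lt hyx)
  set A : Set ℝ := Set.Icc a b ∩ γ ⁻¹' Set.Iic (γ a) with hA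
  have haA : a ∈ A := ⟨⟨le_rfl, le_of_lt hab⟩, le_refl (γ a)⟩
  have hAbdd : BddAbove A := ⟨b, fun x hx => hx.1.2⟩
  have hAclosed : IsClosed A := isClosed_Icc.inter (isClosed_Iic.preimage hcont)
  set s := sSup A with hsdef
  have hsA : s ∈ A := hAclosed.csSup_mem ⟨a, haA⟩ hAbdd
  have has : a ≤ s := hsA.1.1
  have hsb : s ≤ b := hsA.1.2
  have hγs : γ s ≤ γ a := hsA.2
  have hCk : 0 ≤ max C 0 * k := mul_nonneg (le_max_right _ _) hk
  have hγab : γ a < γ b := by linarith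
  have hslt : s < b := by
    rcases lt_or_eq_of_le hsb with h | h
    · exact h
    · exfalso; rw [h] at hγs; linarith
  -- s + k ≤ b
  have hskb : s + k ≤ b := by
    by_contra h
    push_neg at h
    have h1 : γ b - γ s ≤ max C 0 * (b - s) := mvt s b (lt_of_lt_of_le ha has) hslt
    have h2 : max C 0 * (b - s) ≤ max C 0 * k := by
      apply mul_le_mul_of_nonneg_left _ (le_max_right _ _)
      linarith
    linarith
  -- points strictly above s in Ioc s b are above γ a
  have hno : ∀ x ∈ Set.Ioc s b, γ a < γ x := by
    intro x hx
    by_contra hcon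
    push_neg at hcon
    have : x ∈ A := ⟨⟨le_trans has (le_of_lt hx.1), hx.2⟩, hcon⟩
    exact absurd (le_csSup hAbdd this) (not_le.mpr hx.1)
  -- γ a ≤ γ s by right-continuity
  have hge : γ a ≤ γ s := by
    have htend : Tendsto γ (nhdsWithin s (Set.Ioi s)) (nhds (γ s)) :=
      (hcont.continuousAt).continuousWithinAt.tendsto
    refine ge_of_tendsto htend ?_
    filter_upwards [Ioc_mem_nhdsGT_of_mem ⟨le_rfl, hslt⟩] with x hx
    exact le_of_lt (hno x hx)
  refine ⟨s, has, hge, ?_⟩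
  intro u hu
  rcases eq_or_lt_of_le hu.1 with h0 | h0
  · rw [← h0, zero_add]
  · have : u + s ∈ Set.Ioc s b := ⟨by linarith, by linarith [hu.2]⟩
    linarith [hno _ this]

theorem stmt_0 (γ : ℝ → ℝ) (C : ℝ)
    (hγ : ContDiff ℝ 1 γ)
    (hC : ∀ t : ℝ, 0 ≤ t → deriv γ t ≤ C)
    (t : ℕ → ℝ) (ht_pos : ∀ k, 0 < t k)
    (ht : Tendsto t atTop atTop)
    (hγt : Tendsto (fun k => γ (t k)) atTop atTop) :
    ∃ s : ℕ → ℝ,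
      Tendsto s atTop atTop ∧
      Tendsto (fun k => γ (s k)) atTop atTop ∧
      ∀ k : ℕ, ∀ u ∈ Set.Icc (0 : ℝ) (k : ℝ), γ (s k) ≤ γ (u + s k) := by
  have hexists : ∀ k : ℕ, ∃ s : ℝ, (k : ℝ) ≤ s ∧ (k : ℝ) ≤ γ s ∧
      ∀ u ∈ Set.Icc (0 : ℝ) (k : ℝ), γ s ≤ γ (u + s) := by
    intro k
    obtain ⟨n, hn1, hn2⟩ :=
      ((ht.eventually_ge_atTop (k : ℝ)).and (hγt.eventually_ge_atTop (k : ℝ))).exists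
    obtain ⟨m, hm1, hm2⟩ :=
      ((ht.eventually_gt_atTop (t n)).and
        (hγt.eventually_ge_atTop (γ (t n) + max C 0 * (k : ℝ) + 1))).exists
    obtain ⟨s, hs1, hs2, hs3⟩ := stmt_0_key γ C hγ hC (k : ℝ) (Nat.cast_nonneg k)
      (t n) (t m) (ht_pos n) hm1 hm2
    exact ⟨s, le_trans hn1 hs1, le_trans hn2 hs2, hs3⟩
  choose s hs1 hs2 hs3 using hexists
  refine ⟨s, ?_, ?_, hs3⟩
  · exact tendsto_atTop_mono hs1 tendsto_natCast_atTop_atTop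
  · exact tendsto_atTop_mono hs2 tendsto_natCast_atTop_atTop
end

section
/- Let f : ℝ → ℝ be continuous with f(u) < 0 for all u ∈ (q, b), where q < b. Suppose β : ℝ → ℝ is differentiable and satisfies β'(t) = f(β(t)) and β'(t) ≥ 0 for all t ∈ ℝ, together with β(t) ≥ q for all t and β(0) < b. Then β(t) ≤ q for all t ∈ ℝ, i.e. β ≡ q. -/
theorem stmt_7 (f : ℝ → ℝ) (q b : ℝ) (hqb : q < b)
    (hf : Continuous f)
    (hfneg : ∀ u ∈ Set.Ioo q b, f u < 0)
    (β : ℝ → ℝ)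
    (hβ : ∀ t : ℝ, HasDerivAt β (f (β t)) t)
    (hβ' : ∀ t : ℝ, 0 ≤ f (β t))
    (hβq : ∀ t : ℝ, q ≤ β t)
    (hβ0 : β 0 < b) :
    ∀ t : ℝ, β t = q := by
  have hcont : Continuous β := Differentiable.continuous fun t => (hβ t).differentiableAt
  have hnot : ∀ t : ℝ, β t ∉ Set.Ioo q b := by
    intro t ht
    exact absurd (hfneg _ ht) (not_lt.mpr (hβ' t))
  have hmono : Monotone β := by
    apply monotone_of_deriv_nonneg
    · exact fun t => (hβ t).differentiableAt
    · intro t; rw [(hβ t).deriv]; exact hβ' t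
  have hb0 : β 0 = q := by
    rcases lt_or_ge q (β 0) with h | h
    · exact absurd ⟨h, hβ0⟩ (hnot 0)
    · exact le_antisymm h (hβq 0)
  intro t
  rcases le_or_gt t 0 with ht | ht
  · exact le_antisymm (hb0 ▸ hmono ht) (hβq t)
  · by_contra hne
    have h1 : b ≤ β t := by
      rcases lt_or_ge (β t) b with h | h
      · exact absurd ⟨lt_of_le_of_ne (hβq t) (Ne.symm hne), h⟩ (hnot t)
      · exact h
    have hmid : (q + b) / 2 ∈ Set.Icc (β 0) (β t) := by
      constructor
      · rw [hb0]; nlinarith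
      · nlinarith
    obtain ⟨s, _, hs⟩ := intermediate_value_Icc ht.le hcont.continuousOn hmid
    exact absurd ⟨by rw [hs]; linarith, by rw [hs]; linarith⟩ (hnot s)
end

section
/- Let q_* < q < q^* be reals and f : ℝ → ℝ be C¹ with f(q^*) = 0 and f'(q^*) < 0. Suppose P : (q_*, q^*) → ℝ and P₁ : (q, q^*) → ℝ are C¹, strictly negative on the interiors of their domains, satisfy dP/dv = −c − f(v)/P(v) on (q_*, q^*) and dP₁/dv = −c₁ − f(v)/P₁(v) on (q, q^*), and extend continuously with P(q_*) = P(q^*) = 0 and P₁(q) = P₁(q^*) = 0. If additionally the integral ∫_{q̄}^{v} (−f(s))/(P₁(s)P(s)) ds converges as v ↑ q^* for some fixed q̄ ∈ (q, q^*), then c₁ > c. -/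
open Filter Set intervalIntegral

set_option maxHeartbeats 1000000 in
theorem stmt_10 (f : ℝ → ℝ) (hf : ContDiff ℝ 1 f)
    (qs q qstar : ℝ) (hq1 : qs < q) (hq2 : q < qstar)
    (hfq : f qstar = 0) (hf' : deriv f qstar < 0)
    (P P₁ : ℝ → ℝ) (c c₁ : ℝ)
    (hPneg : ∀ v ∈ Set.Ioo qs qstar, P v < 0)
    (hP₁neg : ∀ v ∈ Set.Ioo q qstar, P₁ v < 0)
    (hP : ∀ v ∈ Set.Ioo qs qstar, HasDerivAt P (-c - f v / P v) v)
    (hP₁ : ∀ v ∈ Set.Ioo q qstar, HasDerivAt P₁ (-c₁ - f v / P₁ v) v)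
    (hPcont : ContinuousOn P (Set.Icc qs qstar))
    (hP₁cont : ContinuousOn P₁ (Set.Icc q qstar))
    (hPqs : P qs = 0) (hPqstar : P qstar = 0)
    (hP₁q : P₁ q = 0) (hP₁qstar : P₁ qstar = 0)
    (qbar : ℝ) (hqbar : qbar ∈ Set.Ioo q qstar)
    (hconv : ∃ L : ℝ, Tendsto (fun v => ∫ s in qbar..v, (-f s) / (P₁ s * P s))
      (nhdsWithin qstar (Set.Iio qstar)) (nhds L)) :
    c < c₁ := by
  by_contra hc
  push_neg at hc
  obtain ⟨L, hL⟩ := hconv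
  set h : ℝ → ℝ := fun s => (-f s) / (P₁ s * P s) with hh
  set I : ℝ → ℝ := fun v => ∫ s in qbar..v, h s with hIdef
  set W : ℝ → ℝ := fun v => P₁ v - P v with hWdef
  set g : ℝ → ℝ := fun v => Real.exp (I v) * W v with hgdef
  have hsub1 : Set.Ioo q qstar ⊆ Set.Icc qs qstar :=
    fun x hx => ⟨(hq1.trans hx.1).le, hx.2.le⟩
  have hsub2 : Set.Ioo q qstar ⊆ Set.Icc q qstar := Set.Ioo_subset_Icc_self
  have hsub3 : Set.Ioo q qstar ⊆ Set.Ioo qs qstar :=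
    fun x hx => ⟨hq1.trans hx.1, hx.2⟩
  have hden : ∀ v ∈ Set.Ioo q qstar, P₁ v * P v ≠ 0 := fun v hv =>
    (mul_pos_of_neg_of_neg (hP₁neg v hv) (hPneg v (hsub3 hv))).ne'
  have hhcont : ContinuousOn h (Set.Ioo q qstar) := by
    exact ContinuousOn.div (hf.continuous.neg.continuousOn)
      ((hP₁cont.mono hsub2).mul (hPcont.mono hsub1)) hden
  have hIderiv : ∀ v ∈ Set.Ioo q qstar, HasDerivAt I (h v) v := by
    intro v hv
    apply intervalIntegral.integral_hasDerivAt_right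
    · exact (hhcont.mono ((Set.ordConnected_Ioo).uIcc_subset hqbar hv)).intervalIntegrable
    · exact hhcont.stronglyMeasurableAtFilter isOpen_Ioo v hv
    · exact hhcont.continuousAt (isOpen_Ioo.mem_nhds hv)
  have hgderiv : ∀ v ∈ Set.Ioo q qstar, HasDerivAt g ((c - c₁) * Real.exp (I v)) v := by
    intro v hv
    have hIv := hIderiv v hv
    have hE : HasDerivAt (fun v => Real.exp (I v)) (h v * Real.exp (I v)) v := by
      have := (Real.hasDerivAt_exp (I v)).comp v hIv
      rwa [mul_comm] at this
    have hWv : HasDerivAt W ((-c₁ - f v / P₁ v) - (-c - f v / P v)) v :=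
      (hP₁ v hv).sub (hP v (hsub3 hv))
    have := hE.mul hWv
    refine this.congr_deriv ?_
    have h1 : P₁ v ≠ 0 := (hP₁neg v hv).ne
    have h2 : P v ≠ 0 := (hPneg v (hsub3 hv)).ne
    simp only [hh, hWdef]
    field_simp
    ring
  have hgmono : MonotoneOn g (Set.Ioo q qstar) := by
    apply monotoneOn_of_deriv_nonneg (convex_Ioo q qstar)
    · exact fun v hv => (hgderiv v hv).continuousAt.continuousWithinAt
    · rw [interior_Ioo]
      exact fun v hv => (hgderiv v hv).differentiableAt.differentiableWithinAt
    · rw [interior_Ioo]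
      intro v hv
      rw [(hgderiv v hv).deriv]
      have := Real.exp_pos (I v)
      nlinarith
  have hWlim : Tendsto W (nhdsWithin qstar (Set.Iio qstar)) (nhds 0) := by
    have h1 : Tendsto P₁ (nhdsWithin qstar (Set.Iio qstar)) (nhds 0) := by
      have := ((hP₁cont qstar ⟨hq2.le, le_refl _⟩).mono hsub2)
      rw [ContinuousWithinAt, hP₁qstar] at this
      rwa [← nhdsWithin_Ioo_eq_nhdsLT hq2]
    have h2 : Tendsto P (nhdsWithin qstar (Set.Iio qstar)) (nhds 0) := by
      have := ((hPcont qstar ⟨(hq1.trans hq2).le, le_refl _⟩).mono Set.Ioo_subset_Icc_self)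
      rw [ContinuousWithinAt, hPqstar] at this
      rwa [← nhdsWithin_Ioo_eq_nhdsLT (hq1.trans hq2)]
    simpa using h1.sub h2
  have hglim : Tendsto g (nhdsWithin qstar (Set.Iio qstar)) (nhds (Real.exp L * 0)) :=
    ((Real.continuous_exp.tendsto L).comp hL).mul hWlim
  rw [mul_zero] at hglim
  have hWq : 0 < W q := by
    have := hPneg q ⟨hq1, hq2⟩
    simp only [hWdef, hP₁q]
    linarith
  have hWcont : Tendsto W (nhdsWithin q (Set.Ioo q qstar)) (nhds (W q)) := by
    have c1 : ContinuousWithinAt P₁ (Set.Ioo q qstar) q :=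
      (hP₁cont q ⟨le_refl _, hq2.le⟩).mono hsub2
    have c2 : ContinuousWithinAt P (Set.Ioo q qstar) q :=
      (hPcont q ⟨hq1.le, (hq2).le⟩).mono hsub1
    exact c1.sub c2
  have hne : (nhdsWithin q (Set.Ioo q qstar)).NeBot := by
    rw [nhdsWithin_Ioo_eq_nhdsGT hq2]
    infer_instance
  have hev : ∀ᶠ v in nhdsWithin q (Set.Ioo q qstar), 0 < W v :=
    hWcont.eventually (eventually_gt_nhds hWq)
  obtain ⟨v₀, hv₀pos, hv₀mem⟩ := (hev.and self_mem_nhdsWithin).exists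
  have hv0 : 0 < g v₀ := mul_pos (Real.exp_pos _) hv₀pos
  have hle : ∀ᶠ v in nhdsWithin qstar (Set.Iio qstar), g v₀ ≤ g v := by
    filter_upwards [Ioo_mem_nhdsLT_of_mem ⟨hv₀mem.2, le_refl qstar⟩] with v hv
    exact hgmono hv₀mem ⟨hv₀mem.1.trans hv.1, hv.2⟩ hv.1.le
  have : g v₀ ≤ 0 := ge_of_tendsto hglim hle
  linarith
end

section
/- Let q_j < q_i be reals and f : ℝ → ℝ continuous. Suppose w : ℝ² → ℝ is a C² solution of w_t = w_{rr} + f(w) on ℝ² with w_t(r,t) > 0 and w_r(r,t) < 0 for all (r,t), lim_{r→−∞} w(r,t) = q_i and lim_{r→+∞} w(r,t) = q_j for each t, and such that the integrals below converge. Then ∫_{q_j}^{q_i} f(u) du = −∫_{−∞}^{+∞} w_t(r,t) w_r(r,t) dr > 0, and moreover ∫_{q_j}^{z} f(u) du < ∫_{q_j}^{q_i} f(u) du for every z ∈ (q_j, q_i). -/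
open Filter MeasureTheory intervalIntegral

theorem stmt_16 (f : ℝ → ℝ) (hf : Continuous f)
    (q_i q_j : ℝ) (hq : q_j < q_i)
    (w : ℝ → ℝ → ℝ)
    (hw : ContDiff ℝ 2 (fun p : ℝ × ℝ => w p.1 p.2))
    (heq : ∀ r t : ℝ, deriv (fun s => w r s) t =
      deriv (fun x => deriv (fun x' => w x' t) x) r + f (w r t))
    (hwt : ∀ r t : ℝ, 0 < deriv (fun s => w r s) t)
    (hwr : ∀ r t : ℝ, deriv (fun x => w x t) r < 0)
    (hbot : ∀ t : ℝ, Tendsto (fun r => w r t) atBot (nhds q_i))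
    (htop : ∀ t : ℝ, Tendsto (fun r => w r t) atTop (nhds q_j))
    (hwrbot : ∀ t : ℝ, Tendsto (fun r => deriv (fun x => w x t) r) atBot (nhds 0))
    (hwrtop : ∀ t : ℝ, Tendsto (fun r => deriv (fun x => w x t) r) atTop (nhds 0))
    (hint : ∀ t : ℝ, Integrable
      (fun r => deriv (fun s => w r s) t * deriv (fun x => w x t) r)) :
    (∀ t : ℝ, (∫ u in q_j..q_i, f u) =
        -∫ r : ℝ, deriv (fun s => w r s) t * deriv (fun x => w x t) r) ∧
    (0 < ∫ u in q_j..q_i, f u) ∧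
    (∀ z ∈ Set.Ioo q_j q_i, (∫ u in q_j..z, f u) < ∫ u in q_j..q_i, f u) := by
  set W : ℝ × ℝ → ℝ := fun p => w p.1 p.2 with hWdef
  have hWd : Differentiable ℝ W := hw.differentiable (by norm_num)
  have hfd : ContDiff ℝ 1 (fderiv ℝ W) :=
    hw.fderiv_right (by norm_num)
  have hV : ContDiff ℝ 1 (fun p : ℝ × ℝ => fderiv ℝ W p (1, 0)) :=
    hfd.clm_apply contDiff_const
  -- partial derivative in first variable
  have hder1 : ∀ (x s : ℝ), HasDerivAt (fun x' => w x' s) (fderiv ℝ W (x, s) (1, 0)) x := by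
    intro x s
    have h1 : HasDerivAt (fun x' : ℝ => ((x' : ℝ), s)) ((1 : ℝ), (0 : ℝ)) x :=
      (hasDerivAt_id x).prodMk (hasDerivAt_const x s)
    exact (hWd (x, s)).hasFDerivAt.comp_hasDerivAt x h1
  set F : ℝ → ℝ := fun z => ∫ u in q_j..z, f u with hFdef
  have hF : ∀ z, HasDerivAt F (f z) z := by
    intro z
    exact intervalIntegral.integral_hasDerivAt_right (hf.intervalIntegrable _ _)
      hf.aestronglyMeasurable.stronglyMeasurableAtFilter hf.continuousAt
  have hFc : Continuous F := by
    rw [continuous_iff_continuousAt]; exact fun z => (hF z).continuousAt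
  have hFqj : F q_j = 0 := intervalIntegral.integral_same
  -- main lemma for fixed t
  have main : ∀ t : ℝ,
      F q_i = -∫ r : ℝ, deriv (fun s => w r s) t * deriv (fun x => w x t) r ∧
      (0 < F q_i) ∧ ∀ z ∈ Set.Ioo q_j q_i, F z < F q_i := by
    intro t
    set g' : ℝ → ℝ := fun x => deriv (fun x' => w x' t) x with hg'def
    have hg'_eq : g' = fun x => fderiv ℝ W (x, t) (1, 0) :=
      funext fun x => (hder1 x t).deriv
    have hg'C1 : ContDiff ℝ 1 g' := by
      rw [hg'_eq]; exact hV.comp (contDiff_id.prodMk contDiff_const)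
    have hg'_diff : ∀ r, HasDerivAt g' (deriv g' r) r :=
      fun r => ((hg'C1.differentiable one_ne_zero) r).hasDerivAt
    set H : ℝ → ℝ := fun r => g' r * g' r / 2 + F (w r t) with hHdef
    have hH : ∀ r, HasDerivAt H (deriv (fun s => w r s) t * g' r) r := by
      intro r
      have h1 : HasDerivAt (fun x => g' x * g' x / 2)
          ((deriv g' r * g' r + g' r * deriv g' r) / 2) r :=
        ((hg'_diff r).mul (hg'_diff r)).div_const 2
      have h2 : HasDerivAt (fun x => F (w x t)) (f (w r t) * g' r) r := by
        have := (hF (w r t)).comp r (hder1 r t)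
        rwa [← (hder1 r t).deriv] at this
      have := h1.add h2
      exact this.congr_deriv (by rw [heq r t]; ring)
    have hHtop : Tendsto H atTop (nhds 0) := by
      have h1 : Tendsto (fun r => g' r * g' r / 2) atTop (nhds ((0 : ℝ) * 0 / 2)) :=
        ((hwrtop t).mul (hwrtop t)).div_const 2
      have h2 : Tendsto (fun r => F (w r t)) atTop (nhds (F q_j)) :=
        (hFc.tendsto q_j).comp (htop t)
      have := h1.add h2
      simpa [hFqj] using this
    have hHbot : Tendsto H atBot (nhds (F q_i)) := by
      have h1 : Tendsto (fun r => g' r * g' r / 2) atBot (nhds ((0 : ℝ) * 0 / 2)) :=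
        ((hwrbot t).mul (hwrbot t)).div_const 2
      have h2 : Tendsto (fun r => F (w r t)) atBot (nhds (F q_i)) :=
        (hFc.tendsto q_i).comp (hbot t)
      have := h1.add h2
      simpa using this
    have key : (∫ r : ℝ, deriv (fun s => w r s) t * g' r) = 0 - F q_i :=
      MeasureTheory.integral_of_hasDerivAt_of_tendsto hH (hint t) hHbot hHtop
    have key' : F q_i = -∫ r : ℝ, deriv (fun s => w r s) t * g' r := by
      rw [key]; ring
    refine ⟨key', ?_, ?_⟩
    · -- positivity
      have hneg : ∀ r, deriv (fun s => w r s) t * g' r < 0 :=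
        fun r => mul_neg_of_pos_of_neg (hwt r t) (hwr r t)
      have hi : Integrable (fun r : ℝ => -(deriv (fun s => w r s) t * g' r)) := (hint t).neg
      have hpos : 0 < ∫ r : ℝ, -(deriv (fun s => w r s) t * g' r) := by
        rw [integral_pos_iff_support_of_nonneg
          (f := fun r : ℝ => -(deriv (fun s => w r s) t * g' r))
          (fun r => neg_nonneg.mpr (hneg r).le) hi]
        have : Function.support (fun r => -(deriv (fun s => w r s) t * g' r)) = Set.univ := by
          ext r
          simp only [Function.mem_support, Set.mem_univ, iff_true]
          exact neg_ne_zero.mpr (hneg r).ne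
        rw [this]
        simp
      rw [key']
      rwa [MeasureTheory.integral_neg] at hpos
    · intro z hz
      -- find r₀ with w r₀ t = z
      have hc : Continuous (fun r => w r t) := by
        rw [continuous_iff_continuousAt]; exact fun x => (hder1 x t).continuousAt
      obtain ⟨a, ha⟩ := (Filter.eventually_atBot).mp ((hbot t).eventually
        (eventually_gt_nhds hz.2))
      obtain ⟨b, hb⟩ := (Filter.eventually_atTop).mp ((htop t).eventually
        (eventually_lt_nhds hz.1))
      set c := min a b with hc'
      set d := max a b with hd'
      have hcd : c ≤ d := min_le_max
      have hzc : z < w c t := ha c (min_le_left a b)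
      have hzd : w d t < z := hb d (le_max_right a b)
      have : z ∈ Set.Icc (w d t) (w c t) := ⟨hzd.le, hzc.le⟩
      obtain ⟨r₀, _, hr₀⟩ := intermediate_value_Icc' hcd (hc.continuousOn) this
      -- integral over Iic r₀
      have hIic : (∫ r in Set.Iic r₀, deriv (fun s => w r s) t * g' r) = H r₀ - F q_i :=
        MeasureTheory.integral_Iic_of_hasDerivAt_of_tendsto'
          (fun x _ => hH x) (hint t).integrableOn hHbot
      have hle : (∫ r in Set.Iic r₀, deriv (fun s => w r s) t * g' r) ≤ 0 :=
        integral_nonpos (fun r => (mul_neg_of_pos_of_neg (hwt r t) (hwr r t)).le)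
      rw [hIic] at hle
      have hsq : 0 < g' r₀ * g' r₀ / 2 := by
        have h0 : g' r₀ < 0 := hwr r₀ t
        have := mul_pos_of_neg_of_neg h0 h0
        linarith
      have : H r₀ = g' r₀ * g' r₀ / 2 + F z := by rw [hHdef]; simp [hr₀]
      rw [this] at hle
      linarith
  refine ⟨fun t => (main t).1, (main 0).2.1, (main 0).2.2⟩
end
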